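/- arXiv:math/0304064 — 2 statements merged into one kernel-verified Lean document; each statement's English description precedes it below -/
import Mathlib

section
/- The functor from Δ_big^op to ∇ sending a nonempty finite linearly ordered set I to I* := Hom_{Δ_big}(I, {0,1}) (the set of nondecreasing maps I → {0,1}, equipped with the pointwise order) is an equivalence of categories. Here ∇ is the category of finite linearly ordered sets J with at least 2 elements, with morphisms the nondecreasing maps preserving both the minimal and the maximal element. -/
/-!
STATEMENT 0: The functor `Δ_big^op → ∇` sending a nonempty finite linearly
ordered set `I` to `I* := Hom_{Δ_big}(I, {0,1})` (nondecreasing maps `I → Fin 2`,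
ordered pointwise) is an equivalence of categories.  Here `Δ_big` is the
category `NonemptyFinLinOrd` of nonempty finite linear orders with nondecreasing
maps, and `∇` is the category of finite linear orders with at least two elements
(equivalently: with distinct minimal and maximal elements), whose morphisms are
the nondecreasing maps preserving both the minimal and the maximal element.
-/

open CategoryTheory

universe u

/-- Objects of the category `∇`: finite linear orders with at least two elements
(encoded via a bounded-order structure with `⊥ ≠ ⊤`). -/
structure NablaObj : Type (u + 1) where
  carrier : Type u
  [lin : LinearOrder carrier]
  [fin : Fintype carrier]
  [bdd : BoundedOrder carrier]
  bot_ne_top : (⊥ : carrier) ≠ ⊤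

attribute [instance] NablaObj.lin NablaObj.fin NablaObj.bdd

/-- The category `∇`: morphisms are nondecreasing maps preserving `⊥` and `⊤`. -/
instance : Category NablaObj.{u} where
  Hom J K := {f : J.carrier → K.carrier // Monotone f ∧ f ⊥ = ⊥ ∧ f ⊤ = ⊤}
  id J := ⟨id, monotone_id, rfl, rfl⟩
  comp {J K L} f g := ⟨g.1 ∘ f.1, g.2.1.comp f.2.1,
    by simp [f.2.2.1, g.2.2.1], by simp [f.2.2.2, g.2.2.2]⟩

section starInstances

variable (I : Type u) [LinearOrder I] [Fintype I] [Nonempty I]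

attribute [local instance] Classical.propDecidable

noncomputable instance starLinearOrder : LinearOrder (I →o Fin 2) :=
  { (inferInstance : PartialOrder (I →o Fin 2)) with
    le_total := fun f g => by
      by_cases h : f ≤ g
      · exact Or.inl h
      · refine Or.inr fun j => ?_
        rw [OrderHom.le_def] at h
        push_neg at h
        obtain ⟨i, hi⟩ := h
        show g j ≤ f j
        rw [Fin.lt_def] at hi
        rcases le_total j i with hj | hj
        · have h1 : g j ≤ g i := g.monotone hj
          rw [Fin.le_def] at h1 ⊢
          have h3 := (f j).isLt
          omega
        · have h1 : f i ≤ f j := f.monotone hj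
          rw [Fin.le_def] at h1 ⊢
          have h3 := (g j).isLt
          have h4 := (f j).isLt
          omega
    min := fun a b => if a ≤ b then a else b
    max := fun a b => if a ≤ b then b else a
    toDecidableLE := Classical.decRel _ }

noncomputable instance starFintype : Fintype (I →o Fin 2) :=
  Fintype.ofInjective (fun f => (f : I → Fin 2)) fun f g h => OrderHom.ext _ _ h

instance starBoundedOrder : BoundedOrder (I →o Fin 2) where
  top := ⟨fun _ => Fin.last 1, monotone_const⟩
  le_top f i := Fin.le_last (f i)
  bot := ⟨fun _ => 0, monotone_const⟩
  bot_le f i := Fin.zero_le (f i)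

theorem star_bot_ne_top : (⊥ : I →o Fin 2) ≠ ⊤ := fun h => by
  have h2 : (⊥ : I →o Fin 2) (Classical.arbitrary I) =
      (⊤ : I →o Fin 2) (Classical.arbitrary I) := by rw [h]
  exact absurd h2 (by show ¬ ((0 : Fin 2) = Fin.last 1); decide)

end starInstances

/-- The object part of the star functor: `I ↦ I* = Hom_{Δ_big}(I, Fin 2)`. -/
noncomputable def starObj (I : NonemptyFinLinOrd.{u}) : NablaObj.{u} where
  carrier := I →o Fin 2
  bot_ne_top := star_bot_ne_top I

/-- The star functor `Δ_big^op → ∇`, `I ↦ I*`, acting by precomposition on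
morphisms. -/
noncomputable def starFunctor : NonemptyFinLinOrd.{u}ᵒᵖ ⥤ NablaObj.{u} where
  obj I := starObj I.unop
  map {I I'} f := ⟨fun g => g.comp f.unop.hom.hom, fun _ _ h i => h (f.unop i), rfl, rfl⟩
  map_id I := rfl
  map_comp f g := rfl


section AuxLemmas

variable {I : Type u} [LinearOrder I] [Fintype I] [Nonempty I]

/-- The characteristic monotone map of the upper set `{x | i ≤ x}`. -/
def chi (i : I) : I →o Fin 2 :=
  ⟨fun x => if i ≤ x then 1 else 0, by
    intro a b hab
    dsimp only
    split_ifs with h1 h2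
    · exact le_refl _
    · exact absurd (h1.trans hab) h2
    · omega
    · exact le_refl _⟩

theorem chi_apply (i x : I) : chi i x = if i ≤ x then 1 else 0 := rfl

theorem chi_antitone {i j : I} (h : i ≤ j) : chi j ≤ chi i := by
  intro x
  show (if j ≤ x then (1 : Fin 2) else 0) ≤ (if i ≤ x then 1 else 0)
  split_ifs with h1 h2
  · exact le_refl _
  · exact absurd (h.trans h1) h2
  · omega
  · exact le_refl _

theorem eq_bot_or_eq_chi (g : I →o Fin 2) :
    g = (⊥ : I →o Fin 2) ∨ ∃ i : I, g = chi i := by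
  classical
  by_cases h : ∀ x, g x = 0
  · left
    exact OrderHom.ext _ _ (funext fun x => h x)
  · right
    push_neg at h
    obtain ⟨x₀, hx₀⟩ := h
    have hS : (Finset.univ.filter fun x => g x = 1).Nonempty := by
      refine ⟨x₀, Finset.mem_filter.2 ⟨Finset.mem_univ _, ?_⟩⟩
      omega
    set i := (Finset.univ.filter fun x => g x = 1).min' hS with hi
    have hmem : g i = 1 := (Finset.mem_filter.1 ((Finset.univ.filter fun x => g x = 1).min'_mem hS)).2
    refine ⟨i, OrderHom.ext _ _ (funext fun x => ?_)⟩
    rw [chi_apply]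
    split_ifs with hx
    · have := g.monotone hx
      rw [hmem] at this
      omega
    · push_neg at hx
      by_contra hne
      have hgx : g x = 1 := by omega
      have : i ≤ x := Finset.min'_le _ x (Finset.mem_filter.2 ⟨Finset.mem_univ _, hgx⟩)
      exact absurd this (not_le.2 hx)

theorem chi_bot_eq_top : chi (Finset.univ.min' (Finset.univ_nonempty (α := I))) = (⊤ : I →o Fin 2) := by
  refine OrderHom.ext _ _ (funext fun x => ?_)
  rw [chi_apply, if_pos (Finset.min'_le _ x (Finset.mem_univ x))]
  rfl

theorem bot_apply (x : I) : (⊥ : I →o Fin 2) x = 0 := rfl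

theorem top_apply (x : I) : (⊤ : I →o Fin 2) x = 1 := rfl

end AuxLemmas

/-- Drinfeld, Remarks (ii) of §1 (after Gabriel–Zisman): the functor
`Δ_big^op → ∇`, `I ↦ I* = Hom_{Δ_big}(I, {0,1})` with the pointwise order,
is an equivalence of categories. -/


theorem starFunctor_isEquivalence : starFunctor.{u}.IsEquivalence := by
  classical
  constructor
  · -- faithful
    constructor
    intro X Y f g h
    apply Quiver.Hom.unop_inj
    apply NonemptyFinLinOrd.hom_ext
    refine OrderHom.ext _ _ (funext fun y => ?_)
    by_contra hne
    rcases lt_trichotomy (f.unop.hom.hom y) (g.unop.hom.hom y) with hlt | heq | hlt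
    · have h1 : (chi (g.unop.hom.hom y)).comp f.unop.hom.hom = (chi (g.unop.hom.hom y)).comp g.unop.hom.hom :=
        congrFun (congrArg Subtype.val h) (chi (g.unop.hom.hom y))
      have h2 := DFunLike.congr_fun h1 y
      simp only [OrderHom.comp_coe, Function.comp_apply, chi_apply] at h2
      rw [if_neg (not_le.2 hlt), if_pos (le_refl _)] at h2
      exact absurd h2 (by decide)
    · exact hne heq
    · have h1 : (chi (f.unop.hom.hom y)).comp f.unop.hom.hom = (chi (f.unop.hom.hom y)).comp g.unop.hom.hom :=
        congrFun (congrArg Subtype.val h) (chi (f.unop.hom.hom y))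
      have h2 := DFunLike.congr_fun h1 y
      simp only [OrderHom.comp_coe, Function.comp_apply, chi_apply] at h2
      rw [if_neg (not_le.2 hlt), if_pos (le_refl _)] at h2
      exact absurd h2 (by decide)
  · -- full
    constructor
    intro X Y φ
    let ψ : (↑X.unop →o Fin 2) → (↑Y.unop →o Fin 2) := φ.1
    have hψmono : Monotone ψ := φ.2.1
    have hψbot : ψ ⊥ = ⊥ := φ.2.2.1
    have hψtop : ψ ⊤ = ⊤ := φ.2.2.2
    have hSne : ∀ y : Y.unop, (Finset.univ.filter fun i : X.unop => ψ (chi i) y = 1).Nonempty := by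
      intro y
      refine ⟨Finset.univ.min' Finset.univ_nonempty, Finset.mem_filter.2 ⟨Finset.mem_univ _, ?_⟩⟩
      rw [chi_bot_eq_top, hψtop]
      rfl
    set u : Y.unop → X.unop := fun y =>
      (Finset.univ.filter fun i : X.unop => ψ (chi i) y = 1).max' (hSne y) with hu
    have hiff : ∀ (i : X.unop) (y : Y.unop), ψ (chi i) y = 1 ↔ i ≤ u y := by
      intro i y
      constructor
      · intro h1
        exact Finset.le_max' _ i (Finset.mem_filter.2 ⟨Finset.mem_univ _, h1⟩)
      · intro h1
        have hm : ψ (chi (u y)) y = 1 :=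
          (Finset.mem_filter.1 ((Finset.univ.filter fun i : X.unop => ψ (chi i) y = 1).max'_mem
            (hSne y))).2
        have : ψ (chi (u y)) ≤ ψ (chi i) := hψmono (chi_antitone h1)
        have h2 : (ψ (chi (u y))) y ≤ (ψ (chi i)) y := this y
        rw [hm] at h2
        have h3 := (ψ (chi i) y).isLt
        omega
    have humono : Monotone u := by
      intro y₁ y₂ hy
      refine Finset.max'_subset _ ?_
      intro i hi
      have h1 : ψ (chi i) y₁ = 1 := (Finset.mem_filter.1 hi).2
      have h2 : ψ (chi i) y₁ ≤ ψ (chi i) y₂ := (ψ (chi i)).monotone hy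
      refine Finset.mem_filter.2 ⟨Finset.mem_univ _, ?_⟩
      rw [h1] at h2
      have h3 := (ψ (chi i) y₂).isLt
      omega
    refine ⟨Quiver.Hom.op (NonemptyFinLinOrd.ofHom ⟨u, humono⟩ : Y.unop ⟶ X.unop), ?_⟩
    apply Subtype.ext
    funext g
    show g.comp ⟨u, humono⟩ = ψ g
    rcases eq_bot_or_eq_chi g with rfl | ⟨i, rfl⟩
    · rw [hψbot]
      exact OrderHom.ext _ _ (funext fun y => rfl)
    · refine OrderHom.ext _ _ (funext fun y => ?_)
      show chi i (u y) = ψ (chi i) y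
      rw [chi_apply]
      split_ifs with h1
      · exact ((hiff i y).2 h1).symm
      · have h2 : ψ (chi i) y ≠ 1 := fun hc => h1 ((hiff i y).1 hc)
        have h3 := (ψ (chi i) y).isLt
        omega
  · -- essentially surjective
    constructor
    intro J
    letI : Nonempty ({j : J.carrier // j ≠ ⊤}ᵒᵈ) := ⟨OrderDual.toDual ⟨⊥, J.bot_ne_top⟩⟩
    set X : NonemptyFinLinOrd := NonemptyFinLinOrd.of ({j : J.carrier // j ≠ ⊤}ᵒᵈ) with hX
    set θ : J.carrier → (X →o Fin 2) := fun j =>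
      ⟨fun i => if (OrderDual.ofDual i).1 < j then 1 else 0, by
        intro a b hab
        have hab' : (OrderDual.ofDual b).1 ≤ (OrderDual.ofDual a).1 := hab
        show (if (OrderDual.ofDual a).1 < j then (1 : Fin 2) else 0) ≤
          (if (OrderDual.ofDual b).1 < j then 1 else 0)
        split_ifs with h1 h2
        · exact le_refl _
        · exact absurd (lt_of_le_of_lt hab' h1) h2
        · omega
        · exact le_refl _⟩ with hθ
    have θapp : ∀ (j : J.carrier) (i : X), θ j i = if (OrderDual.ofDual i).1 < j then 1 else 0 :=
      fun _ _ => rfl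
    have θmono : StrictMono θ := by
      have hm : Monotone θ := by
        intro j₁ j₂ hj i
        show (if (OrderDual.ofDual i).1 < j₁ then (1 : Fin 2) else 0) ≤
          (if (OrderDual.ofDual i).1 < j₂ then 1 else 0)
        split_ifs with h1 h2
        · exact le_refl _
        · exact absurd (lt_of_lt_of_le h1 hj) h2
        · omega
        · exact le_refl _
      refine hm.strictMono_of_injective ?_
      have key : ∀ j₁ j₂ : J.carrier, j₁ < j₂ → θ j₁ ≠ θ j₂ := by
        intro j₁ j₂ hlt hjeq
        have hne' : j₁ ≠ ⊤ := fun hc => absurd (hc ▸ hlt) (not_lt.2 le_top)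
        have h0 : θ j₁ (OrderDual.toDual ⟨j₁, hne'⟩) = 0 := by
          exact (θapp _ _).trans (if_neg (lt_irrefl _))
        have h1 : θ j₂ (OrderDual.toDual ⟨j₁, hne'⟩) = 1 := by
          exact (θapp _ _).trans (if_pos hlt)
        rw [hjeq, h1] at h0
        exact absurd h0 (by decide)
      intro j₁ j₂ hjeq
      by_contra hne
      rcases lt_trichotomy j₁ j₂ with hlt | heq | hlt
      · exact key j₁ j₂ hlt hjeq
      · exact hne heq
      · exact key j₂ j₁ hlt hjeq.symm
    have θsurj : Function.Surjective θ := by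
      intro g
      rcases eq_bot_or_eq_chi g with rfl | _
      · refine ⟨⊥, ?_⟩
        refine OrderHom.ext _ _ (funext fun i => ?_)
        rw [θapp, if_neg (not_lt.2 bot_le)]
        rfl
      · by_cases hall : ∀ i : X, g i = 0
        · refine ⟨⊥, ?_⟩
          refine OrderHom.ext _ _ (funext fun i => ?_)
          rw [θapp, if_neg (not_lt.2 bot_le), hall i]
        · push_neg at hall
          obtain ⟨i₀, hi₀⟩ := hall
          have hSne : ((Finset.univ.filter fun i : X => g i = 1).image
              fun i => (OrderDual.ofDual i).1).Nonempty := by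
            refine ⟨(OrderDual.ofDual i₀).1, Finset.mem_image.2 ⟨i₀, Finset.mem_filter.2
              ⟨Finset.mem_univ _, ?_⟩, rfl⟩⟩
            omega
          set t : J.carrier := ((Finset.univ.filter fun i : X => g i = 1).image
            fun i => (OrderDual.ofDual i).1).max' hSne with ht
          obtain ⟨it, hitmem, hitval⟩ := Finset.mem_image.1
            (((Finset.univ.filter fun i : X => g i = 1).image
              fun i => (OrderDual.ofDual i).1).max'_mem hSne)
          have hgit : g it = 1 := (Finset.mem_filter.1 hitmem).2
          have hgiff : ∀ i : X, g i = 1 ↔ (OrderDual.ofDual i).1 ≤ t := by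
            intro i
            constructor
            · intro h1
              exact Finset.le_max' _ _ (Finset.mem_image.2 ⟨i, Finset.mem_filter.2
                ⟨Finset.mem_univ _, h1⟩, rfl⟩)
            · intro h1
              -- i ≥ it in the dual order, so g it ≤ g i
              have hle : it ≤ i := by
                have hkey : (OrderDual.ofDual i).1 ≤ (OrderDual.ofDual it).1 := by
                  rw [hitval]; exact h1
                exact hkey
              have h2 := g.monotone hle
              rw [hgit] at h2
              have h3 := (g i).isLt
              omega
          have hitval' : (OrderDual.ofDual it).1 = t := hitval
          have htne : t ≠ ⊤ := hitval' ▸ (OrderDual.ofDual it).2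
          have hTne : (Finset.univ.filter fun k : J.carrier => ¬ k ≤ t).Nonempty := by
            refine ⟨⊤, Finset.mem_filter.2 ⟨Finset.mem_univ _, fun hc => ?_⟩⟩
            exact htne (le_antisymm le_top hc)
          set j : J.carrier := (Finset.univ.filter fun k : J.carrier => ¬ k ≤ t).min' hTne with hj
          have hjgt : t < j :=
            lt_of_not_ge (Finset.mem_filter.1 ((Finset.univ.filter
              fun k : J.carrier => ¬ k ≤ t).min'_mem hTne)).2
          refine ⟨j, OrderHom.ext _ _ (funext fun i => ?_)⟩
          rw [θapp]
          split_ifs with h1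
          · -- (ofDual i).1 < j ⇒ (ofDual i).1 ≤ t ⇒ g i = 1
            refine ((hgiff i).2 ?_).symm
            by_contra h2
            have : j ≤ (OrderDual.ofDual i).1 := by
              rw [hj]
              exact Finset.min'_le (Finset.univ.filter fun k : J.carrier => ¬ k ≤ t)
                (OrderDual.ofDual i).1 (Finset.mem_filter.2 ⟨Finset.mem_univ _, h2⟩)
            exact absurd this (not_le.2 h1)
          · -- ¬ (ofDual i).1 < j ⇒ ¬ (ofDual i).1 ≤ t ⇒ g i ≠ 1 ⇒ g i = 0
            have h2 : ¬ (OrderDual.ofDual i).1 ≤ t := fun hc =>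
              h1 (lt_of_le_of_lt hc hjgt)
            have h3 : g i ≠ 1 := fun hc => h2 ((hgiff i).1 hc)
            have h4 := (g i).isLt
            omega
    let e : J.carrier ≃o (X →o Fin 2) := StrictMono.orderIsoOfSurjective θ θmono θsurj
    refine ⟨Opposite.op X, ⟨?_⟩⟩
    refine Iso.mk
      (⟨e.symm, e.symm.monotone, ?_, ?_⟩ : starFunctor.obj (Opposite.op X) ⟶ J)
      (⟨e, e.monotone, ?_, ?_⟩ : J ⟶ starFunctor.obj (Opposite.op X)) ?_ ?_
    · exact e.symm.map_bot
    · exact e.symm.map_top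
    · exact e.map_bot
    · exact e.map_top
    · exact Subtype.ext (funext fun g => e.apply_symm_apply g)
    · exact Subtype.ext (funext fun j => e.symm_apply_apply j)
end

section
/- Let C be a small Z₊-category (a category with a chosen endomorphism 1_c of each object c such that f∘1_{c₁} = 1_{c₂}∘f for all f: c₁ → c₂) such that every full subcategory of C with one object is Z₊-isomorphic to [0]_cyc and every full subcategory with two objects is Z₊-isomorphic to [1]_cyc. Then for every pair of objects x, y of C there is a unique morphism f_{xy} : x → y such that every g : x → y is uniquely representable as g = f_{xy} ∘ (1_x)ⁿ for some n ∈ Z₊ (n ≥ 0). -/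
/-!
Z₊-categories (Drinfeld, "On the notion of geometric realization", §2):
a Z₊-category is a category `C` together with a morphism of monoids
`Z₊ → End(id_C)`, i.e. a compatible family of endomorphisms `1_c`.
-/

open CategoryTheory

universe v u

/-- A Z₊-category: a category with a natural endomorphism `1` of the identity
functor (equivalently, a morphism of monoids `Z₊ → End (id_C)`). -/
class ZPlus (C : Type u) [Category.{v} C] where
  one : ∀ c : C, c ⟶ c
  one_natural : ∀ {c d : C} (f : c ⟶ d), one c ≫ f = f ≫ one d

/-- `(1_c)ⁿ`. -/
def ZPlus.onePow {C : Type u} [Category.{v} C] [ZPlus C] (c : C) : ℕ → (c ⟶ c)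
  | 0 => 𝟙 c
  | n + 1 => ZPlus.onePow c n ≫ ZPlus.one c

/-- A Z₊-functor: a functor preserving the distinguished endomorphisms. -/
def IsZFunctor {C : Type*} {D : Type*} [Category C] [Category D] [ZPlus C] [ZPlus D]
    (G : C ⥤ D) : Prop :=
  ∀ c : C, G.map (ZPlus.one c) = ZPlus.one (G.obj c)

/-- An isomorphism of categories: a functor with a strict two-sided inverse. -/
def IsCatIso {C : Type*} {D : Type*} [Category C] [Category D] (G : C ⥤ D) : Prop :=
  ∃ G' : D ⥤ C, G ⋙ G' = 𝟭 C ∧ G' ⋙ G = 𝟭 D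

/-- A Z₊-isomorphism: a Z₊-functor which is an isomorphism of categories. -/
def IsZIso {C : Type*} {D : Type*} [Category C] [Category D] [ZPlus C] [ZPlus D]
    (G : C ⥤ D) : Prop :=
  IsZFunctor G ∧ IsCatIso G

/-- A full subcategory of a Z₊-category is a Z₊-category. -/
instance {C : Type u} [Category.{v} C] [ZPlus C] (Z : C → Prop) :
    ZPlus (ObjectProperty.FullSubcategory Z) where
  one c := InducedCategory.homMk (ZPlus.one c.obj : c.obj ⟶ c.obj)
  one_natural {c d} f := InducedCategory.hom_ext (ZPlus.one_natural (C := C) (f.hom : c.obj ⟶ d.obj))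

/-- `[0]_cyc`: the Z₊-category with one object whose endomorphism monoid is
`(Z₊, +)`, with `1` the generator. -/
def ZeroCyc : Type := SingleObj (Multiplicative ℕ)

instance : Category ZeroCyc := inferInstanceAs (Category (SingleObj (Multiplicative ℕ)))

instance : ZPlus ZeroCyc where
  one _ := Multiplicative.ofAdd (1 : ℕ)
  one_natural {c d} f :=
    mul_comm (G := Multiplicative ℕ) f (Multiplicative.ofAdd 1)

/-- `[1]_cyc`: the Z₊-category with two objects `0`, `1`, in which each hom-set
is a free Z₊-torsor; the morphism `n : x ⟶ y` represents `a·1ⁿ` (resp. `b·1ⁿ`,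
`1ⁿ`), where `a : 0 → 1` and `b : 1 → 0` are the generators, with `b∘a = 1₀`
and `a∘b = 1₁`. -/
def OneCyc : Type := Bool

instance : DecidableEq OneCyc := instDecidableEqBool

/-- Composition in `[1]_cyc`: torsor indices add, with a carry when both
morphisms change the object (since `b∘a = 1₀` and `a∘b = 1₁`). -/
def ocomp (x y z : OneCyc) (n m : ℕ) : ℕ :=
  n + m + (if x ≠ y ∧ y ≠ z then 1 else 0)

instance : Category OneCyc where
  Hom _ _ := ℕ
  id _ := (0 : ℕ)
  comp {x y z} n m := ocomp x y z n m
  id_comp {x y} f := by simp [ocomp]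
  comp_id {x y} f := by simp [ocomp]
  assoc {a b c d} f g h := by
    show ocomp a c d (ocomp a b c f g) h = ocomp a b d f (ocomp b c d g h)
    cases a <;> cases b <;> cases c <;> cases d <;> simp [ocomp, OneCyc] <;> omega

instance : ZPlus OneCyc where
  one _ := (1 : ℕ)
  one_natural {c d} f := by
    show ocomp c c d 1 f = ocomp c d d f 1
    cases c <;> cases d <;> simp [ocomp, OneCyc] <;> omega

/-- Hypothesis: every full subcategory of `C` with one object is Z₊-isomorphic
to `[0]_cyc`. -/
def OneObjHyp (C : Type u) [Category.{v} C] [ZPlus C] : Prop :=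
  ∀ x : C, ∃ Φ : ObjectProperty.FullSubcategory (fun c : C => c = x) ⥤ ZeroCyc, IsZIso Φ

/-- Hypothesis: every full subcategory of `C` with two objects is Z₊-isomorphic
to `[1]_cyc`. -/
def TwoObjHyp (C : Type u) [Category.{v} C] [ZPlus C] : Prop :=
  ∀ x y : C, x ≠ y →
    ∃ Φ : ObjectProperty.FullSubcategory (fun c : C => c = x ∨ c = y) ⥤ OneCyc, IsZIso Φ
/-- In a strict isomorphism of categories, the functor is bijective on homs. -/
lemma catIso_map_bijective {A : Type*} {D : Type*} [Category A] [Category D]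
    {G : A ⥤ D} (h : IsCatIso G) (a b : A) :
    Function.Bijective (G.map : (a ⟶ b) → (G.obj a ⟶ G.obj b)) := by
  obtain ⟨G', h1, h2⟩ := h
  constructor
  · intro f g hfg
    have hf := Functor.congr_hom h1.symm f
    have hg := Functor.congr_hom h1.symm g
    simp only [Functor.comp_map, Functor.id_map] at hf hg
    rw [hf, hg, hfg]
  · intro k
    refine ⟨eqToHom (by rw [← Functor.comp_obj, h1]; rfl) ≫ G'.map k ≫
      eqToHom (by rw [← Functor.comp_obj, h1]; rfl), ?_⟩
    have hk := Functor.congr_hom h2 k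
    simp only [Functor.comp_map, Functor.id_map] at hk
    simp [eqToHom_map, hk]

/-- The abstract counting argument: if homs `x ⟶ y` are in bijection with `ℕ`
compatibly with precomposition by `1_x`, the conclusion of the theorem holds. -/
lemma key_lemma {C : Type u} [Category.{v} C] [ZPlus C] {x y : C}
    (φ : (x ⟶ y) → ℕ) (hb : Function.Bijective φ)
    (hφ : ∀ g, φ (ZPlus.one x ≫ g) = φ g + 1) :
    ∃! f : x ⟶ y, ∀ g : x ⟶ y, ∃! n : ℕ, g = ZPlus.onePow x n ≫ f := by
  have hpow : ∀ (n : ℕ) (g : x ⟶ y), φ (ZPlus.onePow x n ≫ g) = φ g + n := by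
    intro n
    induction n with
    | zero => intro g; simp [ZPlus.onePow]
    | succ n ih =>
      intro g
      have : ZPlus.onePow x (n + 1) ≫ g = ZPlus.onePow x n ≫ (ZPlus.one x ≫ g) := by
        simp [ZPlus.onePow]
      rw [this, ih, hφ]; omega
  obtain ⟨f, hf⟩ := hb.surjective 0
  refine ⟨f, ?_, ?_⟩
  · intro g
    refine ⟨φ g, ?_, ?_⟩
    · apply hb.injective; rw [hpow, hf]; omega
    · intro m hm
      have := congrArg φ hm
      rw [hpow, hf] at this
      omega
  · intro f' hf'
    obtain ⟨n, hn, -⟩ := hf' f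
    have h0 : φ f = φ f' + n := by rw [hn, hpow]
    apply hb.injective
    omega

lemma onePow_mk {C : Type u} [Category.{v} C] [ZPlus C] {Z : C → Prop}
    {x₀ : C} (hx : Z x₀) (n : ℕ) :
    (ZPlus.onePow (⟨x₀, hx⟩ : ObjectProperty.FullSubcategory Z) n).hom = ZPlus.onePow x₀ n := by
  induction n with
  | zero => rfl
  | succ n ih =>
    show (ZPlus.onePow (⟨x₀, hx⟩ : ObjectProperty.FullSubcategory Z) n ≫ ZPlus.one _).hom = _
    rw [InducedCategory.comp_hom, ih]; rfl

/-- Transfer the statement from a full subcategory to the ambient category. -/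
lemma transfer {C : Type u} [Category.{v} C] [ZPlus C] {Z : C → Prop}
    {x₀ y₀ : C} (hx : Z x₀) (hy : Z y₀)
    (h : ∃! f : (⟨x₀, hx⟩ : ObjectProperty.FullSubcategory Z) ⟶
        (⟨y₀, hy⟩ : ObjectProperty.FullSubcategory Z),
      ∀ g, ∃! n : ℕ, g = ZPlus.onePow (⟨x₀, hx⟩ : ObjectProperty.FullSubcategory Z) n ≫ f) :
    ∃! f : x₀ ⟶ y₀, ∀ g : x₀ ⟶ y₀, ∃! n : ℕ, g = ZPlus.onePow x₀ n ≫ f := by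
  obtain ⟨f, hf1, hf2⟩ := h
  refine ⟨f.hom, fun g => ?_, fun f' hf' => ?_⟩
  · obtain ⟨n, hn1, hn2⟩ := hf1 (InducedCategory.homMk g)
    refine ⟨n, ?_, fun m hm => ?_⟩
    · beta_reduce; rw [← onePow_mk hx n]; exact congrArg InducedCategory.Hom.hom hn1
    · refine hn2 m ?_
      apply InducedCategory.hom_ext
      beta_reduce at hm ⊢; rw [← onePow_mk hx m] at hm; exact hm
  · suffices hh : InducedCategory.homMk f' = f from congrArg InducedCategory.Hom.hom hh
    refine hf2 _ fun g => ?_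
    obtain ⟨n, hn1, hn2⟩ := hf' g.hom
    refine ⟨n, ?_, fun m hm => ?_⟩
    · apply InducedCategory.hom_ext
      beta_reduce; rw [← onePow_mk hx n] at hn1; exact hn1
    · refine hn2 m ?_
      have hm' := congrArg InducedCategory.Hom.hom hm
      beta_reduce at hm' ⊢; rw [← onePow_mk hx m]; exact hm'

/-- Drinfeld, proof of Proposition 1: in a small Z₊-category
whose one-object (resp. two-object) full subcategories are Z₊-isomorphic to
`[0]_cyc` (resp. `[1]_cyc`), for every pair of objects `x`, `y` there is a
unique morphism `f_{xy} : x ⟶ y` such that every `g : x ⟶ y` is uniquely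
representable as `g = f_{xy} ∘ (1_x)ⁿ`, `n ∈ Z₊`. -/
theorem exists_unique_basepoint_hom (C : Type u) [SmallCategory C] [ZPlus C]
    (h0 : OneObjHyp C) (h1 : TwoObjHyp C) (x y : C) :
    ∃! f : x ⟶ y, ∀ g : x ⟶ y, ∃! n : ℕ, g = ZPlus.onePow x n ≫ f := by
  by_cases hxy : x = y
  · subst hxy
    obtain ⟨G, hZ, hiso⟩ := h0 x
    refine transfer (Z := fun c : C => c = x) rfl rfl
      (key_lemma (fun g => Multiplicative.toAdd (α := ℕ) (G.map g))
        (Multiplicative.toAdd.bijective.comp (catIso_map_bijective hiso _ _)) ?_)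
    intro g
    beta_reduce
    rw [G.map_comp, hZ ⟨x, rfl⟩]
    exact toAdd_mul (α := ℕ) (G.map g) (ZPlus.one (G.obj ⟨x, rfl⟩))
  · obtain ⟨G, hZ, hiso⟩ := h1 x y hxy
    refine transfer (Z := fun c : C => c = x ∨ c = y) (Or.inl rfl) (Or.inr rfl)
      (key_lemma (fun g => (G.map g : ℕ)) (catIso_map_bijective hiso _ _) ?_)
    intro g
    beta_reduce
    rw [G.map_comp, hZ ⟨x, Or.inl rfl⟩]
    show ocomp (G.obj ⟨x, Or.inl rfl⟩) (G.obj ⟨x, Or.inl rfl⟩) (G.obj ⟨y, Or.inr rfl⟩)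
      1 (G.map g) = _
    simp [ocomp]
    omega
end
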